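/- Let f_i(β) = (1/2)(y_i − x_iᵀβ)² and suppose the online least squares iterates satisfy β_{i+1} = β_i − (XᵀX)_i^{-1}∇f_i(β_i) for i ≥ n_0 (with (XᵀX)_i = ∑_{j≤i} x_j x_jᵀ), Assumption 1 (0 < m ≤ λ_min((1/i)(XᵀX)_i) ≤ λ_max((1/i)(XᵀX)_i) ≤ M for i ≥ n_0) and Assumption 2 (‖β_i − β_j‖ ≤ D and ‖∇f_i(β_i)‖ ≤ G for i,j ≥ n_0). Then (1/n)∑_{i=n_0+1}^{n}(f_i(β_i) − f_i(β̄)) ≤ (G²/(2m))·(log n)/n + (M n_0 D²)/(2n), where β̄ = β_{n+1}; in particular the regret from step n_0+1 to n is O(log(n)/n). -/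

import Mathlib

open Matrix Finset

lemma aux_vecMulVec_mulVec {p : ℕ} (a b v : Fin p → ℝ) :
    Matrix.vecMulVec a b *ᵥ v = (b ⬝ᵥ v) • a := by
  ext i
  simp [Matrix.mulVec, Matrix.vecMulVec_apply, dotProduct, Finset.mul_sum, mul_comm, mul_assoc,
    mul_left_comm]

lemma aux_sym {p : ℕ} (x : ℕ → (Fin p → ℝ)) (i : ℕ) :
    (∑ j ∈ Finset.Icc 1 i, Matrix.vecMulVec (x j) (x j))ᵀ
      = ∑ j ∈ Finset.Icc 1 i, Matrix.vecMulVec (x j) (x j) := by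
  rw [Matrix.transpose_sum]
  refine Finset.sum_congr rfl fun j _ => ?_
  ext k l
  simp [Matrix.vecMulVec_apply, mul_comm]

lemma aux_inv_quad {p : ℕ} (A : Matrix (Fin p) (Fin p) ℝ)
    (hu : IsUnit A) (c : ℝ) (hc : 0 < c)
    (hlb : ∀ v : Fin p → ℝ, c * ∑ l, v l ^ 2 ≤ v ⬝ᵥ (A *ᵥ v))
    (g : Fin p → ℝ) : g ⬝ᵥ ((A⁻¹) *ᵥ g) ≤ (∑ l, g l ^ 2) / c := by
  set w := (A⁻¹) *ᵥ g with hw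
  have hAw : A *ᵥ w = g := by
    rw [hw, Matrix.mulVec_mulVec, Matrix.mul_nonsing_inv _ ((Matrix.isUnit_iff_isUnit_det A).mp hu),
      Matrix.one_mulVec]
  have ht : g ⬝ᵥ w = w ⬝ᵥ (A *ᵥ w) := by
    conv_lhs => rw [← hAw]
    exact dotProduct_comm _ _
  have hCS : (g ⬝ᵥ w) ^ 2 ≤ (∑ l, g l ^ 2) * (∑ l, w l ^ 2) := by
    simpa [dotProduct] using Finset.sum_mul_sq_le_sq_mul_sq Finset.univ g w
  have hlbw := hlb w
  rw [← ht] at hlbw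
  have hWnn : (0:ℝ) ≤ ∑ l, w l ^ 2 := Finset.sum_nonneg fun _ _ => sq_nonneg _
  have hGnn : (0:ℝ) ≤ ∑ l, g l ^ 2 := Finset.sum_nonneg fun _ _ => sq_nonneg _
  have htnn : (0:ℝ) ≤ g ⬝ᵥ w := le_trans (by positivity) hlbw
  rw [le_div_iff₀ hc]
  rcases htnn.eq_or_lt with h | h
  · nlinarith
  · nlinarith

lemma aux_telescope (T : ℕ → ℝ) (a : ℕ) : ∀ n, a ≤ n →
    ∑ i ∈ Finset.Icc (a+1) n, (T (i-1) - T i) = T a - T n := by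
  refine Nat.le_induction ?_ ?_
  · simp
  · intro n hn ih
    rw [Finset.sum_Icc_succ_top (by omega : a + 1 ≤ n + 1), ih]
    push_cast [Nat.add_sub_cancel]
    ring

lemma aux_logsum (a : ℕ) (ha : 1 ≤ a) : ∀ n, a ≤ n →
    ∑ i ∈ Finset.Icc (a+1) n, (1 / (i:ℝ)) ≤ Real.log n - Real.log a := by
  refine Nat.le_induction ?_ ?_
  · simp
  · intro n hn ih
    rw [Finset.sum_Icc_succ_top (by omega : a + 1 ≤ n + 1)]
    have hn1 : (0:ℝ) < n := by exact_mod_cast by omega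
    have hn2 : (0:ℝ) < (n:ℝ) + 1 := by linarith
    have key : (1:ℝ) / ((n:ℝ)+1) ≤ Real.log ((n:ℝ)+1) - Real.log n := by
      have h2 : Real.log ((n:ℝ) / ((n:ℝ)+1)) ≤ (n:ℝ)/((n:ℝ)+1) - 1 :=
        Real.log_le_sub_one_of_pos (by positivity)
      rw [Real.log_div (ne_of_gt hn1) (ne_of_gt hn2)] at h2
      have h3 : (n:ℝ)/((n:ℝ)+1) - 1 = -(1/((n:ℝ)+1)) := by field_simp; ring
      linarith [h3 ▸ h2]
    push_cast
    linarith [ih]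

/-- logarithmic regret of online least squares (Proposition 9 of
the paper), from step n₀+1 to n.  Observations are 1-indexed. -/
theorem online_ls_regret
    (p : ℕ) (x : ℕ → (Fin p → ℝ)) (y : ℕ → ℝ) (β : ℕ → (Fin p → ℝ))
    (f : ℕ → (Fin p → ℝ) → ℝ)
    (hf : ∀ i b, f i b = (1 / 2) * (y i - x i ⬝ᵥ b) ^ 2)
    (A : ℕ → Matrix (Fin p) (Fin p) ℝ)
    (hA : ∀ i : ℕ, A i = ∑ j ∈ Finset.Icc 1 i, Matrix.vecMulVec (x j) (x j))
    (n₀ n : ℕ) (hpn₀ : p < n₀) (hn : n₀ < n)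
    (hinv : ∀ i, n₀ ≤ i → IsUnit (A i))
    (hrec : ∀ i, n₀ ≤ i →
      β (i + 1) = β i - (A i)⁻¹ *ᵥ (-(y i - x i ⬝ᵥ β i) • x i))
    (m M : ℝ) (hm : 0 < m) (hmM : m ≤ M)
    -- Assumption 1: eigenvalue bounds on (1/i)(XᵀX)_i, as quadratic forms
    (hAeig : ∀ i, n₀ ≤ i → ∀ v : Fin p → ℝ,
      m * ∑ l, (v l) ^ 2 ≤ (1 / (i : ℝ)) * (v ⬝ᵥ (A i *ᵥ v)) ∧
      (1 / (i : ℝ)) * (v ⬝ᵥ (A i *ᵥ v)) ≤ M * ∑ l, (v l) ^ 2)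
    -- Assumption 2: bounded iterates and gradients
    (D G : ℝ)
    (hD : ∀ i j, n₀ ≤ i → n₀ ≤ j →
      Real.sqrt (∑ l, (β i l - β j l) ^ 2) ≤ D)
    (hG : ∀ i, n₀ ≤ i →
      Real.sqrt (∑ l, ((-(y i - x i ⬝ᵥ β i)) * x i l) ^ 2) ≤ G) :
    (1 / (n : ℝ)) * ∑ i ∈ Finset.Icc (n₀ + 1) n, (f i (β i) - f i (β (n + 1)))
      ≤ G ^ 2 / (2 * m) * Real.log n / n + M * n₀ * D ^ 2 / (2 * n) := by
  have hn₀1 : 1 ≤ n₀ := by omega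
  set B := β (n + 1) with hB
  set T : ℕ → ℝ := fun i => (β (i+1) - B) ⬝ᵥ (A i *ᵥ (β (i+1) - B)) with hT
  -- the per-step bound
  have step : ∀ j, n₀ ≤ j →
      f (j+1) (β (j+1)) - f (j+1) B
        ≤ (T j - T (j+1))/2 + G^2/(2*m) * (1/((j:ℝ)+1)) := by
    intro j hj
    have hj1 : n₀ ≤ j + 1 := by omega
    set a : ℝ := y (j+1) - x (j+1) ⬝ᵥ β (j+1) with ha
    set g : Fin p → ℝ := (-a) • x (j+1) with hg
    set δ : Fin p → ℝ := β (j+1) - B with hδ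
    set δ' : Fin p → ℝ := β (j+2) - B with hδ'
    set c : ℝ := x (j+1) ⬝ᵥ δ with hc
    set w : Fin p → ℝ := (A (j+1))⁻¹ *ᵥ g with hw
    have hjpos : (0:ℝ) < (j:ℝ) + 1 := by positivity
    have hsym : (A (j+1))ᵀ = A (j+1) := by rw [hA]; exact aux_sym x _
    have hAw : A (j+1) *ᵥ w = g := by
      rw [hw, Matrix.mulVec_mulVec,
        Matrix.mul_nonsing_inv _ ((Matrix.isUnit_iff_isUnit_det _).mp (hinv _ hj1)),
        Matrix.one_mulVec]
    have hδ'w : δ' = δ - w := by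
      rw [hδ', hδ, hw, hg, ha, hrec (j+1) hj1]
      abel
    have h4 : δ' ⬝ᵥ (A (j+1) *ᵥ δ')
        = δ ⬝ᵥ (A (j+1) *ᵥ δ) - 2*(g ⬝ᵥ δ) + g ⬝ᵥ w := by
      have hvm : w ᵥ* (A (j+1)) = g := by
        rw [← hsym, Matrix.vecMul_transpose, hAw]
      rw [hδ'w, Matrix.mulVec_sub, hAw, sub_dotProduct, dotProduct_sub, dotProduct_sub,
        dotProduct_mulVec w, hvm, dotProduct_comm δ g, dotProduct_comm w g]
      ring
    have h5 : A (j+1) = A j + Matrix.vecMulVec (x (j+1)) (x (j+1)) := by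
      rw [hA, hA, Finset.sum_Icc_succ_top (by omega : 1 ≤ j + 1)]
    have h5' : δ ⬝ᵥ (A (j+1) *ᵥ δ) = δ ⬝ᵥ (A j *ᵥ δ) + c^2 := by
      rw [h5, Matrix.add_mulVec, dotProduct_add, aux_vecMulVec_mulVec, dotProduct_smul,
        smul_eq_mul, dotProduct_comm δ (x (j+1)), ← hc]
      ring
    have h6 : f (j+1) (β (j+1)) - f (j+1) B = g ⬝ᵥ δ - c^2/2 := by
      have hxB : x (j+1) ⬝ᵥ B = x (j+1) ⬝ᵥ β (j+1) - c := by
        rw [hc, hδ, dotProduct_sub]; ring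
      have hgδ : g ⬝ᵥ δ = -a * c := by
        rw [hg, smul_dotProduct, smul_eq_mul, ← hc]
      rw [hf, hf, hxB, hgδ, ← ha]
      ring
    have h7 : g ⬝ᵥ w ≤ G^2 / (m * ((j:ℝ)+1)) := by
      have hlb : ∀ v : Fin p → ℝ, m * ((j:ℝ)+1) * ∑ l, v l ^ 2 ≤ v ⬝ᵥ (A (j+1) *ᵥ v) := by
        intro v
        have h := (hAeig (j+1) hj1 v).1
        push_cast at h
        have := mul_le_mul_of_nonneg_left h (le_of_lt hjpos)
        calc m * ((j:ℝ)+1) * ∑ l, v l ^ 2 = ((j:ℝ)+1) * (m * ∑ l, v l ^ 2) := by ring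
          _ ≤ ((j:ℝ)+1) * ((1/((j:ℝ)+1)) * (v ⬝ᵥ (A (j+1) *ᵥ v))) := this
          _ = v ⬝ᵥ (A (j+1) *ᵥ v) := by field_simp
      have hq := aux_inv_quad (A (j+1)) (hinv _ hj1) (m * ((j:ℝ)+1)) (by positivity) hlb g
      have hgsum : ∑ l, g l ^ 2 ≤ G ^ 2 := by
        have hG' := hG (j+1) hj1
        have hnn : (0:ℝ) ≤ ∑ l, ((-(y (j+1) - x (j+1) ⬝ᵥ β (j+1))) * x (j+1) l) ^ 2 :=
          Finset.sum_nonneg fun _ _ => sq_nonneg _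
        have heq : ∑ l, g l ^ 2
            = ∑ l, ((-(y (j+1) - x (j+1) ⬝ᵥ β (j+1))) * x (j+1) l) ^ 2 := by
          refine Finset.sum_congr rfl fun l _ => ?_
          rw [hg, ha]
          simp [Pi.smul_apply, smul_eq_mul]
        rw [heq, ← Real.sq_sqrt hnn]
        exact pow_le_pow_left₀ (Real.sqrt_nonneg _) hG' 2
      calc g ⬝ᵥ w ≤ (∑ l, g l ^ 2) / (m * ((j:ℝ)+1)) := hq
        _ ≤ G^2 / (m * ((j:ℝ)+1)) := by
            gcongr
    have hTj : T j = δ ⬝ᵥ (A j *ᵥ δ) := rfl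
    have hTj1 : T (j+1) = δ' ⬝ᵥ (A (j+1) *ᵥ δ') := rfl
    have harith : G^2/(2*m) * (1/((j:ℝ)+1)) = (G^2 / (m * ((j:ℝ)+1)))/2 := by
      have hm0 : m ≠ 0 := ne_of_gt hm
      have hj0 : ((j:ℝ)+1) ≠ 0 := ne_of_gt hjpos
      have hden : (2*m) * ((j:ℝ)+1) = (m * ((j:ℝ)+1)) * 2 := by ring
      rw [div_mul_div_comm, mul_one, hden, ← div_div]
    rw [h6, hTj, hTj1, harith]
    linarith [h4, h5', h7]
  -- telescoping and bounds
  have hTn : T n = 0 := by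
    simp [hT, hB, sub_self]
  have hTn₀ : T n₀ ≤ M * n₀ * D^2 := by
    have h := (hAeig n₀ le_rfl (β (n₀+1) - B)).2
    have hd := hD (n₀+1) (n+1) (by omega) (by omega)
    have hnn' : (0:ℝ) ≤ ∑ l, (β (n₀+1) l - β (n+1) l) ^ 2 :=
      Finset.sum_nonneg fun _ _ => sq_nonneg _
    have hd2 : ∑ l, ((β (n₀+1) - B) l) ^ 2 ≤ D^2 := by
      have heq : ∑ l, ((β (n₀+1) - B) l) ^ 2 = ∑ l, (β (n₀+1) l - β (n+1) l) ^ 2 := by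
        refine Finset.sum_congr rfl fun l _ => by rw [hB]; rfl
      calc ∑ l, ((β (n₀+1) - B) l) ^ 2 = ∑ l, (β (n₀+1) l - β (n+1) l) ^ 2 := heq
        _ = (Real.sqrt (∑ l, (β (n₀+1) l - β (n+1) l) ^ 2)) ^ 2 := (Real.sq_sqrt hnn').symm
        _ ≤ D ^ 2 := pow_le_pow_left₀ (Real.sqrt_nonneg _) hd 2
    have hn₀pos : (0:ℝ) < (n₀:ℝ) := by exact_mod_cast hn₀1
    have hMnn : (0:ℝ) ≤ M := le_trans hm.le hmM
    have hsumnn : (0:ℝ) ≤ ∑ l, ((β (n₀+1) - B) l) ^ 2 :=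
      Finset.sum_nonneg fun _ _ => sq_nonneg _
    have hTdef : T n₀ = (β (n₀+1) - B) ⬝ᵥ (A n₀ *ᵥ (β (n₀+1) - B)) := rfl
    rw [hTdef]
    have h2 := mul_le_mul_of_nonneg_left h hn₀pos.le
    have h3 : (n₀:ℝ) * (1/(n₀:ℝ) * ((β (n₀+1) - B) ⬝ᵥ (A n₀ *ᵥ (β (n₀+1) - B))))
        = (β (n₀+1) - B) ⬝ᵥ (A n₀ *ᵥ (β (n₀+1) - B)) := by field_simp
    have h4 : M * ∑ l, ((β (n₀+1) - B) l) ^ 2 ≤ M * D^2 :=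
      mul_le_mul_of_nonneg_left hd2 hMnn
    have h5 := mul_le_mul_of_nonneg_left h4 hn₀pos.le
    rw [h3] at h2
    nlinarith [h2, h5]
  have hsum : ∑ i ∈ Finset.Icc (n₀+1) n, (f i (β i) - f i B)
      ≤ (T n₀ - T n)/2 + G^2/(2*m) * ∑ i ∈ Finset.Icc (n₀+1) n, (1/(i:ℝ)) := by
    calc ∑ i ∈ Finset.Icc (n₀+1) n, (f i (β i) - f i B)
        ≤ ∑ i ∈ Finset.Icc (n₀+1) n, ((T (i-1) - T i)/2 + G^2/(2*m) * (1/(i:ℝ))) := by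
          refine Finset.sum_le_sum fun i hi => ?_
          rw [Finset.mem_Icc] at hi
          obtain ⟨j, rfl⟩ : ∃ j, i = j + 1 := ⟨i - 1, by omega⟩
          have := step j (by omega)
          simpa [Nat.add_sub_cancel] using this
      _ = (T n₀ - T n)/2 + G^2/(2*m) * ∑ i ∈ Finset.Icc (n₀+1) n, (1/(i:ℝ)) := by
          rw [Finset.sum_add_distrib, ← Finset.sum_div, aux_telescope T n₀ n hn.le,
            ← Finset.mul_sum]
  have hlog := aux_logsum n₀ hn₀1 n hn.le
  have hlogn₀ : 0 ≤ Real.log n₀ := Real.log_nonneg (by exact_mod_cast hn₀1)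
  have hK : (0:ℝ) ≤ G^2/(2*m) := by positivity
  have hlog' : ∑ i ∈ Finset.Icc (n₀+1) n, (1/(i:ℝ)) ≤ Real.log n := by linarith
  have hsumnn2 : (0:ℝ) ≤ ∑ i ∈ Finset.Icc (n₀+1) n, (1/(i:ℝ)) :=
    Finset.sum_nonneg fun i _ => by positivity
  have htot : ∑ i ∈ Finset.Icc (n₀+1) n, (f i (β i) - f i B)
      ≤ M * n₀ * D^2/2 + G^2/(2*m) * Real.log n := by
    have h1 : G^2/(2*m) * ∑ i ∈ Finset.Icc (n₀+1) n, (1/(i:ℝ))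
        ≤ G^2/(2*m) * Real.log n := mul_le_mul_of_nonneg_left hlog' hK
    rw [hTn] at hsum
    linarith
  have hnpos : (0:ℝ) < (n:ℝ) := by exact_mod_cast by omega
  calc (1 / (n : ℝ)) * ∑ i ∈ Finset.Icc (n₀ + 1) n, (f i (β i) - f i B)
      ≤ (1 / (n : ℝ)) * (M * n₀ * D^2/2 + G^2/(2*m) * Real.log n) :=
        mul_le_mul_of_nonneg_left htot (by positivity)
    _ = G ^ 2 / (2 * m) * Real.log n / n + M * n₀ * D ^ 2 / (2 * n) := by
        field_simp
        ring
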